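/- arXiv:1908.02993 — 2 statements merged into one kernel-verified Lean document; each statement's English description precedes it below -/
import Mathlib

section
/- Let δ > 0 and Q = [0,1]×[0,δ]. Let C^m : ℝ² → ℝ^{2×2×2×2} be a measurable, integrable-on-Q, Q-periodic tensor field that is uniformly elliptic: there is c > 0 with C^m_{ijkl}(ξ) E_{ij} E_{kl} ≥ c |E|² for all 2×2 matrices E and all ξ. Let N_{kpq} : ℝ² → ℝ be continuously differentiable Q-periodic perturbation functions, and define the homogenized tensor C_{pq₁iq₂} = ⟨ C^m_{rjkl} (N_{riq₂,j} + δ_{ir} δ_{jq₂}) (N_{kpq₁,l} + δ_{pk} δ_{lq₁}) ⟩. Then the homogenized tensor inherits the ellipticity constant: for every constant 2×2 matrix H, C_{pq₁iq₂} H_{pq₁} H_{iq₂} ≥ c |H|². (The proof uses that the cell average of each ∂N_{kpq}/∂ξ_l vanishes by periodicity, together with the Cauchy–Schwarz/Jensen inequality ⟨|A|²⟩ ≥ |⟨A⟩|².) -/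
open MeasureTheory

noncomputable section

/-- `g` is periodic with respect to the cell `Q = [0,1] × [0,δ]`. -/
def QPer {α : Type*} (δ : ℝ) (g : (Fin 2 → ℝ) → α) : Prop :=
  (∀ ξ, g (ξ + Pi.single 0 1) = g ξ) ∧ (∀ ξ, g (ξ + Pi.single 1 δ) = g ξ)

/-- The periodicity cell `Q = [0,1] × [0,δ] ⊂ ℝ²`. -/
def cell (δ : ℝ) : Set (Fin 2 → ℝ) := Set.Icc 0 ![1, δ]

/-- Double contraction `C_{ijkl} A_{ij} B_{kl}`. -/
def contr (C : Fin 2 → Fin 2 → Fin 2 → Fin 2 → ℝ) (A B : Fin 2 → Fin 2 → ℝ) : ℝ :=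
  ∑ i, ∑ j, ∑ k, ∑ l, C i j k l * A i j * B k l

/-- Kronecker delta on `Fin 2`. -/
def kron (a b : Fin 2) : ℝ := if a = b then 1 else 0

/-- Partial derivative `N_{kpq,l}(ξ) = ∂N_{kpq}/∂ξ_l (ξ)` of a perturbation function. -/
def pdN (N : Fin 2 → Fin 2 → Fin 2 → (Fin 2 → ℝ) → ℝ) (k p q : Fin 2)
    (ξ : Fin 2 → ℝ) (l : Fin 2) : ℝ :=
  fderiv ℝ (N k p q) ξ (Pi.single l 1)

lemma cell_compact (δ : ℝ) : IsCompact (cell δ) := isCompact_Icc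
lemma cell_meas (δ : ℝ) : MeasurableSet (cell δ) := measurableSet_Icc

lemma vol_cell (δ : ℝ) (hδ : 0 < δ) : (volume (cell δ)).toReal = δ := by
  rw [cell, Real.volume_Icc_pi_toReal (by intro i; fin_cases i <;> simp [hδ.le, zero_le_one])]
  simp [Fin.prod_univ_two]

lemma sq_integral_le (δ : ℝ) (hδ : 0 < δ) (f : (Fin 2 → ℝ) → ℝ)
    (hf : IntegrableOn f (cell δ)) (hf2 : IntegrableOn (fun ξ => f ξ * f ξ) (cell δ)) :
    (∫ ξ in cell δ, f ξ) ^ 2 ≤ δ * ∫ ξ in cell δ, f ξ * f ξ := by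
  set m : ℝ := (∫ ξ in cell δ, f ξ) / δ with hm
  have hconst : IntegrableOn (fun _ : Fin 2 → ℝ => m ^ 2) (cell δ) :=
    integrableOn_const (cell_compact δ).measure_lt_top.ne
  have h2m : IntegrableOn (fun ξ => (2 * m) * f ξ) (cell δ) := hf.const_mul _
  have h0 : (0:ℝ) ≤ ∫ ξ in cell δ, (f ξ - m) ^ 2 :=
    setIntegral_nonneg (cell_meas δ) fun ξ _ => sq_nonneg _
  have hexp : ∫ ξ in cell δ, (f ξ - m) ^ 2
      = (∫ ξ in cell δ, f ξ * f ξ) - (2 * m) * (∫ ξ in cell δ, f ξ) + m ^ 2 * δ := by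
    have hpt : ∀ ξ : Fin 2 → ℝ, (f ξ - m) ^ 2 = (f ξ * f ξ - (2 * m) * f ξ) + m ^ 2 := by
      intro ξ; ring
    rw [setIntegral_congr_fun (cell_meas δ) fun ξ _ => hpt ξ]
    have hsub : IntegrableOn (fun ξ => f ξ * f ξ - (2 * m) * f ξ) (cell δ) := hf2.sub h2m
    rw [integral_add hsub hconst, integral_sub hf2 h2m, integral_const_mul,
      setIntegral_const, measureReal_def, vol_cell δ hδ, smul_eq_mul]
    ring
  have hfm : ∫ ξ in cell δ, f ξ = m * δ := by rw [hm, div_mul_cancel₀ _ hδ.ne']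
  rw [hfm] at hexp ⊢
  nlinarith [h0, hexp, hδ]

lemma sum2_integral (s : Set (Fin 2 → ℝ)) (f : Fin 2 → Fin 2 → (Fin 2 → ℝ) → ℝ)
    (hf : ∀ r j, IntegrableOn (f r j) s) :
    ∑ r, ∑ j, ∫ ξ in s, f r j ξ = ∫ ξ in s, ∑ r, ∑ j, f r j ξ := by
  have h1 : ∀ r, ∑ j, ∫ ξ in s, f r j ξ = ∫ ξ in s, ∑ j, f r j ξ := fun r =>
    (integral_finset_sum _ fun j _ => hf r j).symm
  simp_rw [h1]
  exact (integral_finset_sum _ fun r _ => integrable_finset_sum _ fun j _ => hf r j).symm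

lemma sum4_integral (s : Set (Fin 2 → ℝ)) (f : Fin 2 → Fin 2 → Fin 2 → Fin 2 → (Fin 2 → ℝ) → ℝ)
    (hf : ∀ p q1 i q2, IntegrableOn (f p q1 i q2) s) :
    ∑ p, ∑ q1, ∑ i, ∑ q2, ∫ ξ in s, f p q1 i q2 ξ
      = ∫ ξ in s, ∑ p, ∑ q1, ∑ i, ∑ q2, f p q1 i q2 ξ := by
  have h1 : ∀ p q1, ∑ i, ∑ q2, ∫ ξ in s, f p q1 i q2 ξ = ∫ ξ in s, ∑ i, ∑ q2, f p q1 i q2 ξ :=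
    fun p q1 => sum2_integral s (f p q1) (hf p q1)
  simp_rw [h1]
  exact sum2_integral s (fun p q1 ξ => ∑ i, ∑ q2, f p q1 i q2 ξ)
    (fun p q1 => integrable_finset_sum _ fun i _ => integrable_finset_sum _ fun q2 _ => hf p q1 i q2)

lemma cont_pd (g : (Fin 2 → ℝ) → ℝ) (hg : ContDiff ℝ 1 g) (v : Fin 2 → ℝ) :
    Continuous fun ξ => fderiv ℝ g ξ v :=
  (hg.continuous_fderiv one_ne_zero).clm_apply continuous_const

lemma ftc_slice (g : (Fin 2 → ℝ) → ℝ) (hg : ContDiff ℝ 1 g) (w : Fin 2 → ℝ) (l : Fin 2)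
    (T : ℝ) (hT : 0 ≤ T) (hper : g (w + (Pi.single l T : Fin 2 → ℝ)) = g w) :
    ∫ t in Set.Icc (0:ℝ) T, fderiv ℝ g (w + t • (Pi.single l 1 : Fin 2 → ℝ)) ((Pi.single l 1 : Fin 2 → ℝ)) = 0 := by
  rw [MeasureTheory.integral_Icc_eq_integral_Ioc, ← intervalIntegral.integral_of_le hT]
  have hd : ∀ t ∈ Set.uIcc (0:ℝ) T,
      HasDerivAt (fun t : ℝ => g (w + t • (Pi.single l 1 : Fin 2 → ℝ)))
        (fderiv ℝ g (w + t • (Pi.single l 1 : Fin 2 → ℝ)) ((Pi.single l 1 : Fin 2 → ℝ))) t := by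
    intro t _
    have hφ : HasDerivAt (fun t : ℝ => w + t • (Pi.single l 1 : Fin 2 → ℝ)) ((Pi.single l 1 : Fin 2 → ℝ)) t := by
      simpa using ((hasDerivAt_id t).smul_const (Pi.single l (1:ℝ))).const_add w
    exact ((hg.differentiable one_ne_zero).differentiableAt.hasFDerivAt).comp_hasDerivAt t hφ
  rw [intervalIntegral.integral_eq_sub_of_hasDerivAt hd
    (((cont_pd g hg _).comp (by continuity)).intervalIntegrable 0 T)]
  have h1 : w + (T:ℝ) • (Pi.single l 1 : Fin 2 → ℝ) = w + (Pi.single l T : Fin 2 → ℝ) := by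
    funext i; by_cases h : i = l <;> simp [h, Pi.single_apply]
  simp [h1, hper]

lemma mean_pd_zero (δ : ℝ) (hδ : 0 < δ) (g : (Fin 2 → ℝ) → ℝ) (hg : ContDiff ℝ 1 g)
    (hper : QPer δ g) (l : Fin 2) :
    ∫ ξ in cell δ, fderiv ℝ g ξ ((Pi.single l 1 : Fin 2 → ℝ)) = 0 := by
  set v : Fin 2 → ℝ := Pi.single l 1
  set G : ℝ × ℝ → ℝ := fun p => fderiv ℝ g ![p.1, p.2] v with hG
  have hmk : Continuous fun p : ℝ × ℝ => (![p.1, p.2] : Fin 2 → ℝ) := by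
    refine continuous_pi fun i => ?_
    fin_cases i
    · exact continuous_fst
    · exact continuous_snd
  have hGc : Continuous G := (cont_pd g hg v).comp hmk
  have hpre : cell δ = MeasurableEquiv.finTwoArrow ⁻¹' (Set.Icc (0:ℝ) 1 ×ˢ Set.Icc (0:ℝ) δ) := by
    ext ξ
    constructor
    · rintro ⟨h1, h2⟩
      rw [Pi.le_def] at h1 h2
      exact ⟨⟨h1 0, h2 0⟩, ⟨h1 1, h2 1⟩⟩
    · rintro ⟨⟨a0, a1⟩, ⟨b0, b1⟩⟩
      refine ⟨?_, ?_⟩ <;> rw [Pi.le_def] <;> intro i <;> fin_cases i <;> simpa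
  have hfun : ∀ ξ : Fin 2 → ℝ, fderiv ℝ g ξ v = G (MeasurableEquiv.finTwoArrow ξ) := by
    intro ξ
    have : (![ξ 0, ξ 1] : Fin 2 → ℝ) = ξ := by
      funext i; fin_cases i <;> simp
    simp [hG, this]
  have h1 : ∫ ξ in cell δ, fderiv ℝ g ξ v
      = ∫ p in Set.Icc (0:ℝ) 1 ×ˢ Set.Icc (0:ℝ) δ, G p := by
    rw [hpre]
    rw [← (volume_preserving_finTwoArrow ℝ).setIntegral_preimage_emb
      (MeasurableEquiv.finTwoArrow).measurableEmbedding G _]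
    exact setIntegral_congr_fun ((measurableSet_Icc.prod measurableSet_Icc).preimage (MeasurableEquiv.measurable _)) fun ξ _ => hfun ξ
  rw [h1]
  have hint0 : IntegrableOn G (Set.Icc (0:ℝ) 1 ×ˢ Set.Icc (0:ℝ) δ) volume :=
    hGc.continuousOn.integrableOn_compact (isCompact_Icc.prod isCompact_Icc)
  have hint : Integrable G ((volume.restrict (Set.Icc (0:ℝ) 1)).prod (volume.restrict (Set.Icc (0:ℝ) δ))) := by
    rw [Measure.prod_restrict]
    rw [Measure.volume_eq_prod] at hint0
    exact hint0
  fin_cases l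
  · -- derivative in x : inner integral over x
    have h2 : ∫ p in Set.Icc (0:ℝ) 1 ×ˢ Set.Icc (0:ℝ) δ, G p
        = ∫ y in Set.Icc (0:ℝ) δ, ∫ x in Set.Icc (0:ℝ) 1, G (x, y) := by
      rw [Measure.volume_eq_prod, ← Measure.prod_restrict]
      exact integral_prod_symm G hint
    rw [h2]
    have hz : ∀ y : ℝ, ∫ x in Set.Icc (0:ℝ) 1, G (x, y) = 0 := by
      intro y
      have hpt : ∀ x : ℝ, (![x, y] : Fin 2 → ℝ) = ![0, y] + x • (Pi.single 0 1 : Fin 2 → ℝ) := by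
        intro x; funext i; fin_cases i <;> simp
      calc ∫ x in Set.Icc (0:ℝ) 1, G (x, y)
          = ∫ x in Set.Icc (0:ℝ) 1, fderiv ℝ g (![0, y] + x • (Pi.single 0 1 : Fin 2 → ℝ)) ((Pi.single 0 1 : Fin 2 → ℝ)) := by
            refine setIntegral_congr_fun measurableSet_Icc fun x _ => ?_
            simp only [hG, hpt x, show v = (Pi.single 0 1 : Fin 2 → ℝ) from rfl]
        _ = 0 := ftc_slice g hg ![0, y] 0 1 zero_le_one (by
            have := hper.1 ![0, y]
            simpa using this)
    simp [hz]
  · -- derivative in y : inner integral over y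
    have h2 : ∫ p in Set.Icc (0:ℝ) 1 ×ˢ Set.Icc (0:ℝ) δ, G p
        = ∫ x in Set.Icc (0:ℝ) 1, ∫ y in Set.Icc (0:ℝ) δ, G (x, y) := by
      rw [Measure.volume_eq_prod]
      exact setIntegral_prod G (by rwa [← Measure.volume_eq_prod])
    rw [h2]
    have hz : ∀ x : ℝ, ∫ y in Set.Icc (0:ℝ) δ, G (x, y) = 0 := by
      intro x
      have hpt : ∀ y : ℝ, (![x, y] : Fin 2 → ℝ) = ![x, 0] + y • (Pi.single 1 1 : Fin 2 → ℝ) := by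
        intro y; funext i; fin_cases i <;> simp
      calc ∫ y in Set.Icc (0:ℝ) δ, G (x, y)
          = ∫ y in Set.Icc (0:ℝ) δ, fderiv ℝ g (![x, 0] + y • (Pi.single 1 1 : Fin 2 → ℝ)) ((Pi.single 1 1 : Fin 2 → ℝ)) := by
            refine setIntegral_congr_fun measurableSet_Icc fun y _ => ?_
            simp only [hG, hpt y, show v = (Pi.single 1 1 : Fin 2 → ℝ) from rfl]
        _ = 0 := ftc_slice g hg ![x, 0] 1 δ hδ.le (by
            have := hper.2 ![x, 0]
            simpa using this)
    simp [hz]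

lemma alg_id (Cq D : Fin 2 → Fin 2 → Fin 2 → Fin 2 → ℝ) (H : Fin 2 → Fin 2 → ℝ) :
    ∑ p, ∑ q1, ∑ i, ∑ q2, (∑ r, ∑ j, ∑ k, ∑ l,
        Cq r j k l * (D r i q2 j + kron i r * kron j q2) *
          (D k p q1 l + kron p k * kron l q1)) * H p q1 * H i q2
    = contr Cq (fun r j => ∑ i, ∑ q2, (D r i q2 j + kron i r * kron j q2) * H i q2)
        (fun r j => ∑ i, ∑ q2, (D r i q2 j + kron i r * kron j q2) * H i q2) := by
  simp only [contr, Fin.sum_univ_two]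
  simp only [kron]
  norm_num
  ring


/-- The homogenized tensor inherits the ellipticity constant: if `Cᵐ` is measurable,
integrable on `Q`, `Q`-periodic and uniformly elliptic with constant `c > 0`, then for
every constant matrix `H`, `C_{pq₁iq₂} H_{pq₁} H_{iq₂} ≥ c |H|²`. -/
theorem homogenized_tensor_elliptic (δ : ℝ) (hδ : 0 < δ) (c : ℝ) (hc : 0 < c)
    (Cm : (Fin 2 → ℝ) → Fin 2 → Fin 2 → Fin 2 → Fin 2 → ℝ)
    (hCmeas : ∀ i j k l, Measurable fun ξ => Cm ξ i j k l)
    (hCint : ∀ i j k l, IntegrableOn (fun ξ => Cm ξ i j k l) (cell δ))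
    (hCper : QPer δ Cm)
    (hCell : ∀ (ξ : Fin 2 → ℝ) (E : Fin 2 → Fin 2 → ℝ),
      c * (∑ i, ∑ j, E i j * E i j) ≤ contr (Cm ξ) E E)
    (N : Fin 2 → Fin 2 → Fin 2 → (Fin 2 → ℝ) → ℝ)
    (hN : ∀ k p q, ContDiff ℝ 1 (N k p q))
    (hNper : ∀ k p q, QPer δ (N k p q))
    (Chom : Fin 2 → Fin 2 → Fin 2 → Fin 2 → ℝ)
    (hChom : ∀ p q1 i q2, Chom p q1 i q2 =
      (1 / δ) * ∫ ξ in cell δ, ∑ r, ∑ j, ∑ k, ∑ l,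
        Cm ξ r j k l * (pdN N r i q2 ξ j + kron i r * kron j q2) *
          (pdN N k p q1 ξ l + kron p k * kron l q1)) :
    ∀ H : Fin 2 → Fin 2 → ℝ,
      c * (∑ i, ∑ j, H i j * H i j) ≤
        ∑ p, ∑ q1, ∑ i, ∑ q2, Chom p q1 i q2 * H p q1 * H i q2 := by
  intro H
  have hpdNc : ∀ k p q l, Continuous fun ξ => pdN N k p q ξ l :=
    fun k p q l => cont_pd (N k p q) (hN k p q) _
  set A : (Fin 2 → ℝ) → Fin 2 → Fin 2 → ℝ :=
    fun ξ r j => ∑ i, ∑ q2, (pdN N r i q2 ξ j + kron i r * kron j q2) * H i q2 with hA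
  have hAc : ∀ r j, Continuous fun ξ => A ξ r j := by
    intro r j
    exact continuous_finset_sum _ fun i _ => continuous_finset_sum _ fun q2 _ =>
      (((hpdNc r i q2 j).add continuous_const).mul continuous_const)
  have hAint : ∀ r j, IntegrableOn (fun ξ => A ξ r j) (cell δ) := fun r j =>
    (hAc r j).integrableOn_Icc
  have hAAint : ∀ r j k l, IntegrableOn (fun ξ => A ξ r j * A ξ k l) (cell δ) := fun r j k l =>
    ((hAc r j).mul (hAc k l)).integrableOn_Icc
  -- integrability of the Chom integrands times constants
  set f : Fin 2 → Fin 2 → Fin 2 → Fin 2 → (Fin 2 → ℝ) → ℝ :=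
    fun p q1 i q2 ξ => ∑ r, ∑ j, ∑ k, ∑ l,
      Cm ξ r j k l * (pdN N r i q2 ξ j + kron i r * kron j q2) *
        (pdN N k p q1 ξ l + kron p k * kron l q1) with hf
  have hfint : ∀ p q1 i q2, IntegrableOn (f p q1 i q2) (cell δ) := by
    intro p q1 i q2
    refine integrable_finset_sum _ fun r _ => integrable_finset_sum _ fun j _ =>
      integrable_finset_sum _ fun k _ => integrable_finset_sum _ fun l _ => ?_
    exact ((hCint r j k l).mul_continuousOn
        (((hpdNc r i q2 j).add continuous_const).continuousOn) (cell_compact δ)).mul_continuousOn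
      (((hpdNc k p q1 l).add continuous_const).continuousOn) (cell_compact δ)
  have hcontr_int : IntegrableOn (fun ξ => contr (Cm ξ) (A ξ) (A ξ)) (cell δ) := by
    have : (fun ξ => contr (Cm ξ) (A ξ) (A ξ))
        = fun ξ => ∑ i, ∑ j, ∑ k, ∑ l, Cm ξ i j k l * A ξ i j * A ξ k l := rfl
    rw [this]
    refine integrable_finset_sum _ fun r _ => integrable_finset_sum _ fun j _ =>
      integrable_finset_sum _ fun k _ => integrable_finset_sum _ fun l _ => ?_
    exact ((hCint r j k l).mul_continuousOn (hAc r j).continuousOn (cell_compact δ)).mul_continuousOn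
      (hAc k l).continuousOn (cell_compact δ)
  -- step 1 : the quadratic form as one integral
  have key : ∑ p, ∑ q1, ∑ i, ∑ q2, Chom p q1 i q2 * H p q1 * H i q2
      = (1 / δ) * ∫ ξ in cell δ, contr (Cm ξ) (A ξ) (A ξ) := by
    have e1 : ∀ p q1 i q2, Chom p q1 i q2 * H p q1 * H i q2
        = (1 / δ) * ∫ ξ in cell δ, f p q1 i q2 ξ * H p q1 * H i q2 := by
      intro p q1 i q2
      rw [hChom p q1 i q2, mul_assoc, mul_assoc]
      congr 1
      rw [← integral_mul_const]
      exact setIntegral_congr_fun (cell_meas δ) fun ξ _ => by ring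
    calc ∑ p, ∑ q1, ∑ i, ∑ q2, Chom p q1 i q2 * H p q1 * H i q2
        = ∑ p, ∑ q1, ∑ i, ∑ q2, (1 / δ) * ∫ ξ in cell δ, f p q1 i q2 ξ * H p q1 * H i q2 := by
          exact Finset.sum_congr rfl fun p _ => Finset.sum_congr rfl fun q1 _ =>
            Finset.sum_congr rfl fun i _ => Finset.sum_congr rfl fun q2 _ => e1 p q1 i q2
      _ = (1 / δ) * ∑ p, ∑ q1, ∑ i, ∑ q2, ∫ ξ in cell δ, f p q1 i q2 ξ * H p q1 * H i q2 := by
          simp only [Finset.mul_sum]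
      _ = (1 / δ) * ∫ ξ in cell δ, ∑ p, ∑ q1, ∑ i, ∑ q2, f p q1 i q2 ξ * H p q1 * H i q2 := by
          rw [sum4_integral _ _ fun p q1 i q2 =>
            (((hfint p q1 i q2).mul_const _).mul_const _)]
      _ = (1 / δ) * ∫ ξ in cell δ, contr (Cm ξ) (A ξ) (A ξ) := by
          congr 1
          refine setIntegral_congr_fun (cell_meas δ) fun ξ _ => ?_
          exact alg_id (Cm ξ) (fun a b c d => pdN N a b c ξ d) H
  rw [key]
  -- step 2 : the mean of A is H
  have hmean : ∀ r j, ∫ ξ in cell δ, A ξ r j = δ * H r j := by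
    intro r j
    have hpt : ∀ ξ, A ξ r j = (∑ i, ∑ q2, pdN N r i q2 ξ j * H i q2) + H r j := by
      intro ξ
      rw [hA]
      fin_cases r <;> fin_cases j <;> simp [kron, Fin.sum_univ_two] <;> ring
    have hsumint : IntegrableOn (fun ξ => ∑ i, ∑ q2, pdN N r i q2 ξ j * H i q2) (cell δ) := by
      refine integrable_finset_sum _ fun i _ => integrable_finset_sum _ fun q2 _ => ?_
      exact ((hpdNc r i q2 j).mul continuous_const).integrableOn_Icc
    have hconst : IntegrableOn (fun _ : Fin 2 → ℝ => H r j) (cell δ) :=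
      integrableOn_const (cell_compact δ).measure_lt_top.ne
    rw [setIntegral_congr_fun (cell_meas δ) fun ξ _ => hpt ξ, integral_add hsumint hconst]
    have hpint : ∀ i q2, IntegrableOn (fun ξ => pdN N r i q2 ξ j * H i q2) (cell δ) :=
      fun i q2 => ((hpdNc r i q2 j).mul continuous_const).integrableOn_Icc
    have hz : ∫ ξ in cell δ, ∑ i, ∑ q2, pdN N r i q2 ξ j * H i q2 = 0 := by
      rw [integral_finset_sum _ fun i _ => integrable_finset_sum _ fun q2 _ => hpint i q2]
      refine Finset.sum_eq_zero fun i _ => ?_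
      rw [integral_finset_sum _ fun q2 _ => hpint i q2]
      refine Finset.sum_eq_zero fun q2 _ => ?_
      rw [integral_mul_const]
      have : ∫ ξ in cell δ, pdN N r i q2 ξ j = 0 :=
        mean_pd_zero δ hδ (N r i q2) (hN r i q2) (hNper r i q2) j
      rw [this, zero_mul]
    rw [hz, setIntegral_const, measureReal_def, vol_cell δ hδ, smul_eq_mul, zero_add]
  -- step 3 : variance inequality per component
  have hvar : ∀ r j, δ * (H r j * H r j) ≤ ∫ ξ in cell δ, A ξ r j * A ξ r j := by
    intro r j
    have h1 := sq_integral_le δ hδ (fun ξ => A ξ r j) (hAint r j) (hAAint r j r j)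
    rw [hmean r j] at h1
    nlinarith [h1, hδ, sq_nonneg (H r j)]
  -- step 4 : pointwise ellipticity and conclusion
  have h6 : δ * (c * ∑ i, ∑ j, H i j * H i j) ≤ ∫ ξ in cell δ, contr (Cm ξ) (A ξ) (A ξ) := by
    calc δ * (c * ∑ i, ∑ j, H i j * H i j) = c * ∑ r, ∑ j, δ * (H r j * H r j) := by
          simp only [Fin.sum_univ_two]; ring
      _ ≤ c * ∑ r, ∑ j, ∫ ξ in cell δ, A ξ r j * A ξ r j := by
          refine mul_le_mul_of_nonneg_left ?_ hc.le
          exact Finset.sum_le_sum fun r _ => Finset.sum_le_sum fun j _ => hvar r j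
      _ = c * ∫ ξ in cell δ, ∑ r, ∑ j, A ξ r j * A ξ r j := by
          rw [sum2_integral _ _ fun r j => hAAint r j r j]
      _ = ∫ ξ in cell δ, c * ∑ r, ∑ j, A ξ r j * A ξ r j := (integral_const_mul c _).symm
      _ ≤ ∫ ξ in cell δ, contr (Cm ξ) (A ξ) (A ξ) := by
          refine setIntegral_mono_on ?_ hcontr_int (cell_meas δ) fun ξ _ => hCell ξ (A ξ)
          exact (Continuous.mul continuous_const (continuous_finset_sum _ fun r _ =>
            continuous_finset_sum _ fun j _ => (hAc r j).mul (hAc r j))).integrableOn_Icc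
  have h7 := mul_le_mul_of_nonneg_left h6 (le_of_lt (one_div_pos.2 hδ))
  calc c * (∑ i, ∑ j, H i j * H i j)
      = (1 / δ) * (δ * (c * ∑ i, ∑ j, H i j * H i j)) := by field_simp
    _ ≤ (1 / δ) * ∫ ξ in cell δ, contr (Cm ξ) (A ξ) (A ξ) := h7
end
end

section
/- Let δ > 0 and Q = [0,1]×[0,δ]. Let C¹ᵐ, C²ᵐ : ℝ² → ℝ^{2×2×2×2} be measurable, bounded, Q-periodic tensor fields, each pointwise symmetric and positive semidefinite, and ordered as quadratic forms: C¹ᵐ_{ijkl}(ξ) E_{ij} E_{kl} ≤ C²ᵐ_{ijkl}(ξ) E_{ij} E_{kl} for every 2×2 matrix E and every ξ. Fix a constant 2×2 matrix H, and let w¹, w² : ℝ² → ℝ² be continuously differentiable Q-periodic solutions of the respective weak corrector cell problems: ∫_Q Cᵃᵐ_{ijkl} (H_{kl} + ∂wᵃ_k/∂ξ_l)(∂φ_i/∂ξ_j) dξ = 0 for all continuously differentiable Q-periodic φ, a = 1, 2. Then the homogenized quadratic forms are ordered the same way: ∫_Q C¹ᵐ_{ijkl} (H_{ij} + ∂w¹_i/∂ξ_j)(H_{kl}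 + ∂w¹_k/∂ξ_l) dξ ≤ ∫_Q C²ᵐ_{ijkl} (H_{ij} + ∂w²_i/∂ξ_j)(H_{kl} + ∂w²_k/∂ξ_l) dξ. -/
open MeasureTheory

noncomputable section

/-- Displacement gradient `(∇v)_{kl}(ξ) = ∂v_k/∂ξ_l (ξ)`. -/
def sgrad (v : (Fin 2 → ℝ) → (Fin 2 → ℝ)) (ξ : Fin 2 → ℝ) : Fin 2 → Fin 2 → ℝ :=
  fun k l => fderiv ℝ (fun ζ => v ζ k) ξ (Pi.single l 1)

lemma contr_expand (C : Fin 2 → Fin 2 → Fin 2 → Fin 2 → ℝ) (E P : Fin 2 → Fin 2 → ℝ) :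
    contr C (fun i j => E i j + P i j) (fun k l => E k l + P k l)
      = contr C E E + contr C E P + contr C P E + contr C P P := by
  simp only [contr, Fin.sum_univ_two]; ring

lemma contr_symm (C : Fin 2 → Fin 2 → Fin 2 → Fin 2 → ℝ)
    (hsym : ∀ i j k l, C i j k l = C k l i j) (A B : Fin 2 → Fin 2 → ℝ) :
    contr C A B = contr C B A := by
  simp only [contr, Fin.sum_univ_two]
  linear_combination (hsym 0 0 0 0) * (A 0 0 * B 0 0) + (hsym 0 0 0 1) * (A 0 0 * B 0 1)
    + (hsym 0 0 1 0) * (A 0 0 * B 1 0) + (hsym 0 0 1 1) * (A 0 0 * B 1 1)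
    + (hsym 0 1 0 0) * (A 0 1 * B 0 0) + (hsym 0 1 0 1) * (A 0 1 * B 0 1)
    + (hsym 0 1 1 0) * (A 0 1 * B 1 0) + (hsym 0 1 1 1) * (A 0 1 * B 1 1)
    + (hsym 1 0 0 0) * (A 1 0 * B 0 0) + (hsym 1 0 0 1) * (A 1 0 * B 0 1)
    + (hsym 1 0 1 0) * (A 1 0 * B 1 0) + (hsym 1 0 1 1) * (A 1 0 * B 1 1)
    + (hsym 1 1 0 0) * (A 1 1 * B 0 0) + (hsym 1 1 0 1) * (A 1 1 * B 0 1)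
    + (hsym 1 1 1 0) * (A 1 1 * B 1 0) + (hsym 1 1 1 1) * (A 1 1 * B 1 1)

lemma integ_aux (δ : ℝ) (C : (Fin 2 → ℝ) → Fin 2 → Fin 2 → Fin 2 → Fin 2 → ℝ)
    (hCmeas : ∀ i j k l, Measurable fun ξ => C ξ i j k l)
    (hCbdd : ∃ M, ∀ ξ i j k l, |C ξ i j k l| ≤ M)
    (A B : (Fin 2 → ℝ) → Fin 2 → Fin 2 → ℝ)
    (hA : ∀ i j, Continuous fun ξ => A ξ i j)
    (hB : ∀ i j, Continuous fun ξ => B ξ i j) :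
    IntegrableOn (fun ξ => contr (C ξ) (A ξ) (B ξ)) (cell δ) := by
  obtain ⟨M, hM⟩ := hCbdd
  have hMnn : 0 ≤ M := le_trans (abs_nonneg _) (hM 0 0 0 0 0)
  simp only [contr]
  apply integrable_finset_sum; intro i _
  apply integrable_finset_sum; intro j _
  apply integrable_finset_sum; intro k _
  apply integrable_finset_sum; intro l _
  obtain ⟨KA, hKA⟩ := (cell_compact δ).exists_bound_of_continuousOn ((hA i j).continuousOn)
  obtain ⟨KB, hKB⟩ := (cell_compact δ).exists_bound_of_continuousOn ((hB k l).continuousOn)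
  apply Measure.integrableOn_of_bounded ((cell_compact δ).measure_lt_top).ne
  · exact (((hCmeas i j k l).mul (hA i j).measurable).mul
      (hB k l).measurable).aestronglyMeasurable
  · have hms : MeasurableSet (cell δ) := measurableSet_Icc
    rw [ae_restrict_iff' hms]
    refine ae_of_all _ fun ξ hξ => ?_
    have h1 : ‖A ξ i j‖ ≤ max KA 0 := le_trans (hKA ξ hξ) (le_max_left _ _)
    have h2 : ‖B ξ k l‖ ≤ max KB 0 := le_trans (hKB ξ hξ) (le_max_left _ _)
    have : ‖C ξ i j k l * A ξ i j * B ξ k l‖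
        = |C ξ i j k l| * ‖A ξ i j‖ * ‖B ξ k l‖ := by
      simp [abs_mul, Real.norm_eq_abs]
    rw [this]
    calc |C ξ i j k l| * ‖A ξ i j‖ * ‖B ξ k l‖
        ≤ M * max KA 0 * ‖B ξ k l‖ := by
          apply mul_le_mul_of_nonneg_right _ (norm_nonneg _)
          exact mul_le_mul (hM ξ i j k l) h1 (norm_nonneg _) hMnn
      _ ≤ M * max KA 0 * max KB 0 :=
          mul_le_mul_of_nonneg_left h2 (mul_nonneg hMnn (le_max_right _ _))

lemma sgrad_cont (v : (Fin 2 → ℝ) → (Fin 2 → ℝ)) (hv : ContDiff ℝ 1 v) (k l : Fin 2) :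
    Continuous fun ξ => sgrad v ξ k l := by
  have hk : ContDiff ℝ 1 fun ζ => v ζ k :=
    (ContinuousLinearMap.proj k : (Fin 2 → ℝ) →L[ℝ] ℝ).contDiff.comp hv
  exact (hk.continuous_fderiv one_ne_zero).clm_apply continuous_const

lemma comp_diff (v : (Fin 2 → ℝ) → (Fin 2 → ℝ)) (hv : ContDiff ℝ 1 v) (k : Fin 2) :
    Differentiable ℝ fun ζ => v ζ k :=
  ((ContinuousLinearMap.proj k : (Fin 2 → ℝ) →L[ℝ] ℝ).contDiff.comp hv).differentiable one_ne_zero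

/-- Monotonicity of homogenization: if the microscopic tensors `C¹ᵐ ≤ C²ᵐ` as
quadratic forms (both measurable, bounded, `Q`-periodic, symmetric and positive
semidefinite) and `w¹`, `w²` are `C¹` `Q`-periodic solutions of the respective weak
corrector cell problems for the same constant matrix `H`, then the homogenized
energies are ordered the same way. -/
theorem homogenized_energy_monotone (δ : ℝ) (hδ : 0 < δ)
    (C1m C2m : (Fin 2 → ℝ) → Fin 2 → Fin 2 → Fin 2 → Fin 2 → ℝ)
    (hC1meas : ∀ i j k l, Measurable fun ξ => C1m ξ i j k l)
    (hC2meas : ∀ i j k l, Measurable fun ξ => C2m ξ i j k l)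
    (hC1bdd : ∃ M, ∀ ξ i j k l, |C1m ξ i j k l| ≤ M)
    (hC2bdd : ∃ M, ∀ ξ i j k l, |C2m ξ i j k l| ≤ M)
    (hC1per : QPer δ C1m) (hC2per : QPer δ C2m)
    (hC1sym : ∀ ξ i j k l, C1m ξ i j k l = C1m ξ k l i j)
    (hC2sym : ∀ ξ i j k l, C2m ξ i j k l = C2m ξ k l i j)
    (hC1psd : ∀ (ξ : Fin 2 → ℝ) (E : Fin 2 → Fin 2 → ℝ), 0 ≤ contr (C1m ξ) E E)
    (hC2psd : ∀ (ξ : Fin 2 → ℝ) (E : Fin 2 → Fin 2 → ℝ), 0 ≤ contr (C2m ξ) E E)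
    (hord : ∀ (ξ : Fin 2 → ℝ) (E : Fin 2 → Fin 2 → ℝ),
      contr (C1m ξ) E E ≤ contr (C2m ξ) E E)
    (H : Fin 2 → Fin 2 → ℝ)
    (w1 w2 : (Fin 2 → ℝ) → (Fin 2 → ℝ))
    (hw1 : ContDiff ℝ 1 w1) (hw2 : ContDiff ℝ 1 w2)
    (hw1per : QPer δ w1) (hw2per : QPer δ w2)
    (hweak1 : ∀ φ : (Fin 2 → ℝ) → (Fin 2 → ℝ), ContDiff ℝ 1 φ → QPer δ φ →
      (∫ ξ in cell δ, contr (C1m ξ) (sgrad φ ξ)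
        (fun k l => H k l + sgrad w1 ξ k l)) = 0)
    (hweak2 : ∀ φ : (Fin 2 → ℝ) → (Fin 2 → ℝ), ContDiff ℝ 1 φ → QPer δ φ →
      (∫ ξ in cell δ, contr (C2m ξ) (sgrad φ ξ)
        (fun k l => H k l + sgrad w2 ξ k l)) = 0) :
    (∫ ξ in cell δ, contr (C1m ξ) (fun i j => H i j + sgrad w1 ξ i j)
        (fun k l => H k l + sgrad w1 ξ k l)) ≤
      ∫ ξ in cell δ, contr (C2m ξ) (fun i j => H i j + sgrad w2 ξ i j)
        (fun k l => H k l + sgrad w2 ξ k l) := by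
  have hms : MeasurableSet (cell δ) := measurableSet_Icc
  set φ : (Fin 2 → ℝ) → (Fin 2 → ℝ) := fun ζ => w2 ζ - w1 ζ with hφdef
  have hφ : ContDiff ℝ 1 φ := hw2.sub hw1
  have hφper : QPer δ φ := by
    constructor
    · intro ξ; show w2 (ξ + _) - w1 (ξ + _) = w2 ξ - w1 ξ
      rw [hw1per.1, hw2per.1]
    · intro ξ; show w2 (ξ + _) - w1 (ξ + _) = w2 ξ - w1 ξ
      rw [hw1per.2, hw2per.2]
  have hq : ∀ ξ k l, sgrad φ ξ k l = sgrad w2 ξ k l - sgrad w1 ξ k l := by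
    intro ξ k l
    simp only [sgrad]
    have hcomp : (fun ζ => φ ζ k) = fun ζ => w2 ζ k - w1 ζ k := by
      funext ζ; simp [hφdef]
    rw [hcomp, fderiv_fun_sub (comp_diff w2 hw2 k ξ) (comp_diff w1 hw1 k ξ)]
    simp
  -- continuity of the matrix fields
  have hA1c : ∀ i j : Fin 2, Continuous fun ξ => H i j + sgrad w1 ξ i j :=
    fun i j => continuous_const.add (sgrad_cont w1 hw1 i j)
  have hA2c : ∀ i j : Fin 2, Continuous fun ξ => H i j + sgrad w2 ξ i j :=
    fun i j => continuous_const.add (sgrad_cont w2 hw2 i j)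
  have hPc : ∀ i j : Fin 2, Continuous fun ξ => sgrad φ ξ i j :=
    fun i j => sgrad_cont φ hφ i j
  -- integrability facts
  have h11 : IntegrableOn (fun ξ => contr (C1m ξ)
      (fun i j => H i j + sgrad w1 ξ i j) (fun k l => H k l + sgrad w1 ξ k l)) (cell δ) :=
    integ_aux δ C1m hC1meas hC1bdd _ _ hA1c hA1c
  have h22₁ : IntegrableOn (fun ξ => contr (C1m ξ)
      (fun i j => H i j + sgrad w2 ξ i j) (fun k l => H k l + sgrad w2 ξ k l)) (cell δ) :=
    integ_aux δ C1m hC1meas hC1bdd _ _ hA2c hA2c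
  have h22₂ : IntegrableOn (fun ξ => contr (C2m ξ)
      (fun i j => H i j + sgrad w2 ξ i j) (fun k l => H k l + sgrad w2 ξ k l)) (cell δ) :=
    integ_aux δ C2m hC2meas hC2bdd _ _ hA2c hA2c
  have hP1 : IntegrableOn (fun ξ => contr (C1m ξ)
      (sgrad φ ξ) (fun k l => H k l + sgrad w1 ξ k l)) (cell δ) :=
    integ_aux δ C1m hC1meas hC1bdd _ _ hPc hA1c
  have hPP : IntegrableOn (fun ξ => contr (C1m ξ) (sgrad φ ξ) (sgrad φ ξ)) (cell δ) :=
    integ_aux δ C1m hC1meas hC1bdd _ _ hPc hPc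
  -- pointwise expansion
  have hpt : ∀ ξ, contr (C1m ξ)
      (fun i j => H i j + sgrad w2 ξ i j) (fun k l => H k l + sgrad w2 ξ k l)
      = contr (C1m ξ) (fun i j => H i j + sgrad w1 ξ i j)
          (fun k l => H k l + sgrad w1 ξ k l)
        + 2 * contr (C1m ξ) (sgrad φ ξ) (fun k l => H k l + sgrad w1 ξ k l)
        + contr (C1m ξ) (sgrad φ ξ) (sgrad φ ξ) := by
    intro ξ
    have hq' : (fun i j => H i j + sgrad w2 ξ i j)
        = fun i j => (H i j + sgrad w1 ξ i j) + sgrad φ ξ i j := by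
      funext i j; rw [hq]; ring
    rw [hq']
    rw [contr_expand (C1m ξ) (fun i j => H i j + sgrad w1 ξ i j) (sgrad φ ξ)]
    rw [contr_symm (C1m ξ) (hC1sym ξ) (fun i j => H i j + sgrad w1 ξ i j) (sgrad φ ξ)]
    ring
  -- the weak form kills the cross term
  have hcross : (∫ ξ in cell δ, contr (C1m ξ) (sgrad φ ξ)
      (fun k l => H k l + sgrad w1 ξ k l)) = 0 := hweak1 φ hφ hφper
  -- split the integral
  have key : (∫ ξ in cell δ, contr (C1m ξ)
      (fun i j => H i j + sgrad w2 ξ i j) (fun k l => H k l + sgrad w2 ξ k l))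
      = (∫ ξ in cell δ, contr (C1m ξ)
          (fun i j => H i j + sgrad w1 ξ i j) (fun k l => H k l + sgrad w1 ξ k l))
        + 2 * (∫ ξ in cell δ, contr (C1m ξ) (sgrad φ ξ)
            (fun k l => H k l + sgrad w1 ξ k l))
        + ∫ ξ in cell δ, contr (C1m ξ) (sgrad φ ξ) (sgrad φ ξ) := by
    have hsum : IntegrableOn (fun ξ =>
        contr (C1m ξ) (fun i j => H i j + sgrad w1 ξ i j)
          (fun k l => H k l + sgrad w1 ξ k l)
        + 2 * contr (C1m ξ) (sgrad φ ξ) (fun k l => H k l + sgrad w1 ξ k l)) (cell δ) :=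
      h11.add (hP1.const_mul 2)
    rw [integral_congr_ae (ae_of_all _ hpt), integral_add hsum hPP,
      integral_add h11 (hP1.const_mul 2), integral_const_mul]
  have hPPnn : 0 ≤ ∫ ξ in cell δ, contr (C1m ξ) (sgrad φ ξ) (sgrad φ ξ) :=
    setIntegral_nonneg hms fun ξ _ => hC1psd ξ _
  have step1 : (∫ ξ in cell δ, contr (C1m ξ)
      (fun i j => H i j + sgrad w1 ξ i j) (fun k l => H k l + sgrad w1 ξ k l))
      ≤ ∫ ξ in cell δ, contr (C1m ξ)
          (fun i j => H i j + sgrad w2 ξ i j) (fun k l => H k l + sgrad w2 ξ k l) := by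
    rw [key, hcross]; linarith
  have step2 : (∫ ξ in cell δ, contr (C1m ξ)
      (fun i j => H i j + sgrad w2 ξ i j) (fun k l => H k l + sgrad w2 ξ k l))
      ≤ ∫ ξ in cell δ, contr (C2m ξ)
          (fun i j => H i j + sgrad w2 ξ i j) (fun k l => H k l + sgrad w2 ξ k l) :=
    setIntegral_mono_on h22₁ h22₂ hms fun ξ _ => hord ξ _
  linarith
end
end
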